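/- For a finite simple graph G with vertices v_1,…,v_n of degrees d_1,…,d_n and m edges, the graph energy satisfies E(G) ≤ Σ_{i=1}^n √(d_i) ≤ √(2mn), and the second inequality is an equality if and only if G is regular. -/

import Mathlib

open Matrix Finset
open scoped MatrixOrder

/-- The energy of the vertex `i` of a finite simple graph `G`:
the `(i,i)` entry of `|A| = (A Aᴴ)^{1/2}`, where `A` is the adjacency matrix. -/
noncomputable def vertexEnergy {n : ℕ} (G : SimpleGraph (Fin n)) [DecidableRel G.Adj]
    (i : Fin n) : ℝ :=
  CFC.sqrt (G.adjMatrix ℝ * (G.adjMatrix ℝ)ᴴ) i i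

/-- The energy of a finite simple graph: the sum of the energies of its vertices,
i.e. the trace of `|A|`. -/
noncomputable def graphEnergy {n : ℕ} (G : SimpleGraph (Fin n)) [DecidableRel G.Adj] : ℝ :=
  ∑ i, vertexEnergy G i

-- diagonal entry of a psd real matrix is nonneg
lemma psd_diag_nonneg {n : ℕ} {B : Matrix (Fin n) (Fin n) ℝ} (hB : B.PosSemidef)
    (i : Fin n) : 0 ≤ B i i := by
  exact hB.diag_nonneg

lemma conjT_adj {n : ℕ} (G : SimpleGraph (Fin n)) [DecidableRel G.Adj] :
    (G.adjMatrix ℝ)ᴴ = G.adjMatrix ℝ := by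
  ext i j
  simp [Matrix.conjTranspose_apply, SimpleGraph.adj_comm]

lemma vertexEnergy_le {n : ℕ} (G : SimpleGraph (Fin n)) [DecidableRel G.Adj] (i : Fin n) :
    vertexEnergy G i ≤ Real.sqrt (G.degree i) := by
  set hP := Matrix.posSemidef_self_mul_conjTranspose (G.adjMatrix ℝ)
  set S := CFC.sqrt (G.adjMatrix ℝ * (G.adjMatrix ℝ)ᴴ) with hS
  have hpsd : S.PosSemidef := Matrix.nonneg_iff_posSemidef.mp (CFC.sqrt_nonneg _)
  have hsym : Sᴴ = S := hpsd.1
  have hsq : S * S = G.adjMatrix ℝ * (G.adjMatrix ℝ)ᴴ := CFC.sqrt_mul_sqrt_self _ (Matrix.nonneg_iff_posSemidef.mpr hP)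
  have hdeg : (S * S) i i = (G.degree i : ℝ) := by
    rw [hsq, conjT_adj, SimpleGraph.adjMatrix_mul_self_apply_self]
  have hentry : (S * S) i i = ∑ j, (S i j) ^ 2 := by
    rw [Matrix.mul_apply]
    refine Finset.sum_congr rfl fun j _ => ?_
    have : S j i = S i j := by
      conv_lhs => rw [← hsym]
      simp [Matrix.conjTranspose_apply]
    rw [this, sq]
  have h1 : (S i i) ^ 2 ≤ ∑ j, (S i j) ^ 2 :=
    Finset.single_le_sum (f := fun j => (S i j) ^ 2) (fun j _ => sq_nonneg _) (Finset.mem_univ i)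
  have h0 : 0 ≤ S i i := psd_diag_nonneg hpsd i
  have : (S i i) ^ 2 ≤ (G.degree i : ℝ) := by rw [← hdeg, hentry]; exact h1
  calc S i i = Real.sqrt ((S i i) ^ 2) := by rw [Real.sqrt_sq h0]
    _ ≤ Real.sqrt (G.degree i) := Real.sqrt_le_sqrt this

theorem stmt_1 {n : ℕ} (G : SimpleGraph (Fin n)) [DecidableRel G.Adj]
    (m : ℕ) (hm : m = G.edgeFinset.card) :
    graphEnergy G ≤ ∑ i, Real.sqrt (G.degree i) ∧
    (∑ i, Real.sqrt (G.degree i)) ≤ Real.sqrt (2 * m * n) ∧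
    ((∑ i, Real.sqrt (G.degree i)) = Real.sqrt (2 * m * n) ↔
      ∃ d, G.IsRegularOfDegree d) := by
  set a : Fin n → ℝ := fun i => Real.sqrt (G.degree i) with ha
  have ha0 : ∀ i, 0 ≤ a i := fun i => Real.sqrt_nonneg _
  have hasq : ∀ i, a i ^ 2 = (G.degree i : ℝ) := fun i =>
    Real.sq_sqrt (Nat.cast_nonneg _)
  have hsum_sq : ∑ i, a i ^ 2 = 2 * m := by
    simp only [hasq]
    rw [← Nat.cast_sum, hm]
    rw [G.sum_degrees_eq_twice_card_edges]
    push_cast; ring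
  have hsum_nonneg : 0 ≤ ∑ i, a i := Finset.sum_nonneg fun i _ => ha0 i
  have hCS : (∑ i, a i) ^ 2 ≤ 2 * m * n := by
    calc (∑ i, a i) ^ 2 ≤ ((Finset.univ : Finset (Fin n)).card : ℝ) * ∑ i, a i ^ 2 :=
          sq_sum_le_card_mul_sum_sq (s := (Finset.univ : Finset (Fin n))) (f := a)
      _ = 2 * m * n := by
          rw [hsum_sq, Finset.card_univ, Fintype.card_fin]; ring
  refine ⟨?_, ?_, ?_⟩
  · exact Finset.sum_le_sum fun i _ => vertexEnergy_le G i
  · exact (Real.le_sqrt hsum_nonneg (by positivity)).mpr hCS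
  · constructor
    · intro heq
      have h2 : (∑ i, a i) ^ 2 = 2 * m * n := by
        rw [heq, Real.sq_sqrt (by positivity)]
      -- variance identity
      have hrow : ∀ i, ∑ j, (a i - a j) ^ 2 =
          (n : ℝ) * a i ^ 2 - 2 * a i * (∑ j, a j) + ∑ j, a j ^ 2 := by
        intro i
        simp only [sub_sq, Finset.sum_add_distrib, Finset.sum_sub_distrib,
          Finset.sum_const, Finset.card_univ, Fintype.card_fin, nsmul_eq_mul,
          mul_assoc, ← Finset.mul_sum]
      have hkey : ∑ i, ∑ j, (a i - a j) ^ 2 =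
          2 * ((n : ℝ) * ∑ i, a i ^ 2) - 2 * (∑ i, a i) ^ 2 := by
        simp only [hrow, Finset.sum_add_distrib, Finset.sum_sub_distrib,
          Finset.sum_const, Finset.card_univ, Fintype.card_fin, nsmul_eq_mul,
          ← Finset.mul_sum, ← Finset.sum_mul]
        ring
      have hzero : ∑ i, ∑ j, (a i - a j) ^ 2 = 0 := by
        rw [hkey, h2]
        have : (n:ℝ) * ∑ i, a i ^ 2 = 2 * m * n := by rw [hsum_sq]; ring
        rw [this]; ring
      have hall : ∀ i j : Fin n, a i = a j := by
        intro i j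
        have h1 : ∀ i ∈ Finset.univ, (0:ℝ) ≤ ∑ j, (a i - a j)^2 :=
          fun i _ => Finset.sum_nonneg fun j _ => sq_nonneg _
        have h2' := (Finset.sum_eq_zero_iff_of_nonneg h1).mp hzero i (Finset.mem_univ i)
        have h3 := (Finset.sum_eq_zero_iff_of_nonneg (fun j _ => sq_nonneg (a i - a j))).mp h2' j (Finset.mem_univ j)
        nlinarith [h3]
      rcases Nat.eq_zero_or_pos n with hn | hn
      · subst hn; exact ⟨0, fun v => absurd v.2 (by omega)⟩
      · refine ⟨G.degree ⟨0, hn⟩, fun v => ?_⟩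
        have := hall v ⟨0, hn⟩
        have : (G.degree v : ℝ) = G.degree ⟨0, hn⟩ := by
          rw [← hasq, ← hasq, this]
        exact_mod_cast this
    · rintro ⟨d, hd⟩
      have hdm : 2 * m = n * d := by
        rw [hm, ← G.sum_degrees_eq_twice_card_edges]
        simp [hd _, Finset.sum_const, Finset.card_univ]
      have : ∑ i, a i = n * Real.sqrt d := by
        simp [ha, hd _, Finset.sum_const, Finset.card_univ, nsmul_eq_mul]
      rw [this]
      have hc : (2:ℝ) * m = n * d := by exact_mod_cast hdm
      rw [show ((2:ℝ) * m * n) = (n:ℝ)^2 * d by nlinarith [hc]]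
      rw [Real.sqrt_mul (by positivity), Real.sqrt_sq (by positivity)]
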